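/- Let H and G be finite simple graphs. If G contains no induced copy of H and G contains at most one triangle (at most one 3-clique), then G contains no copy of the augmented pattern H⁺, i.e., G is H⁺-free. -/
import Mathlib


open SimpleGraph

/-- Vertex type of the augmented pattern `H⁺`: the vertices of `H` together with two new
vertices `(s, false)` and `(s, true)` for every non-edge `s = {u,v}` of `H`. -/
abbrev AugVert {V : Type*} (H : SimpleGraph V) : Type _ :=
  V ⊕ ({s : Sym2 V // ¬ s.IsDiag ∧ s ∉ H.edgeSet} × Bool)

/-- The augmented pattern `H⁺`: all edges of `H`, together with, for each non-edge
`{u,v}` of `H`, the four edges joining `u` and `v` to the two new vertices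
`(⟨{u,v},_⟩, false)` and `(⟨{u,v},_⟩, true)`. -/
def augment {V : Type*} (H : SimpleGraph V) : SimpleGraph (AugVert H) :=
  SimpleGraph.fromRel (fun x y =>
    match x, y with
    | Sum.inl a, Sum.inl b => H.Adj a b
    | Sum.inl a, Sum.inr p => a ∈ p.1.1
    | _, _ => False)

/-- If `G` contains no induced copy of `H` and has at most one triangle, then `G`
contains no copy of the augmented pattern `H⁺`. -/
theorem induced_free_unique_triangle_augment_free {V U : Type*} [Fintype V] [Fintype U]
    (H : SimpleGraph V) (G : SimpleGraph U)
    (hfree : ¬ ∃ φ : V → U, Function.Injective φ ∧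
      ∀ a b : V, H.Adj a b ↔ G.Adj (φ a) (φ b))
    (htri : ∀ T₁ T₂ : Finset U, G.IsNClique 3 T₁ → G.IsNClique 3 T₂ → T₁ = T₂) :
    ¬ ∃ ψ : augment H →g G, Function.Injective ψ := by
  classical
  rintro ⟨ψ, hinj⟩
  apply hfree
  refine ⟨fun a => ψ (Sum.inl a), fun a b hab => Sum.inl_injective (hinj hab), fun a b => ?_⟩
  constructor
  · intro h
    exact ψ.map_adj (by
      rw [augment, fromRel_adj]
      exact ⟨by simpa using h.ne, Or.inl h⟩)
  · intro hG
    by_contra hH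
    have hab : a ≠ b := fun e => G.irrefl (e ▸ hG)
    have hs : ¬ (s(a,b)).IsDiag ∧ s(a,b) ∉ H.edgeSet := ⟨by simpa using hab, by simpa using hH⟩
    set x : AugVert H := Sum.inr (⟨s(a,b), hs⟩, false) with hx
    set y : AugVert H := Sum.inr (⟨s(a,b), hs⟩, true) with hy
    have hax : (augment H).Adj (Sum.inl a) x := by
      rw [augment, fromRel_adj]
      exact ⟨by simp [hx], Or.inl (by simp [hx])⟩
    have hbx : (augment H).Adj (Sum.inl b) x := by
      rw [augment, fromRel_adj]
      exact ⟨by simp [hx], Or.inl (by simp [hx])⟩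
    have hay : (augment H).Adj (Sum.inl a) y := by
      rw [augment, fromRel_adj]
      exact ⟨by simp [hy], Or.inl (by simp [hy])⟩
    have hby : (augment H).Adj (Sum.inl b) y := by
      rw [augment, fromRel_adj]
      exact ⟨by simp [hy], Or.inl (by simp [hy])⟩
    have T1 : G.IsNClique 3 {ψ (Sum.inl a), ψ (Sum.inl b), ψ x} :=
      is3Clique_triple_iff.2 ⟨hG, (ψ.map_adj hax).symm.symm, ψ.map_adj hbx⟩
    have T2 : G.IsNClique 3 {ψ (Sum.inl a), ψ (Sum.inl b), ψ y} :=
      is3Clique_triple_iff.2 ⟨hG, ψ.map_adj hay, ψ.map_adj hby⟩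
    have heq := htri _ _ T1 T2
    have hxmem : ψ x ∈ ({ψ (Sum.inl a), ψ (Sum.inl b), ψ y} : Finset U) := by
      rw [← heq]; simp
    simp only [Finset.mem_insert, Finset.mem_singleton] at hxmem
    rcases hxmem with h | h | h
    · exact absurd (hinj h) (by simp [hx])
    · exact absurd (hinj h) (by simp [hx])
    · exact absurd (hinj h) (by simp [hx, hy])
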